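/- Let n ≥ 2, let k > 2 be a natural number, and let λ₁, …, λₙ be nonzero complex numbers. Define Φ : ℂⁿ → ℂ^{n−1} by Φ(z)_j = λ₁ z₁^{k−1}·conj(z_j) − λ_j z_j^{k−1}·conj(z₁) for j = 2, …, n. Then for every z ∈ ℂⁿ with z₁ ≠ 0 and Φ(z) = 0, the real Fréchet derivative of Φ at z, as an ℝ-linear map ℂⁿ → ℂ^{n−1} (identifying ℂⁿ ≅ ℝ^{2n} and ℂ^{n−1} ≅ ℝ^{2n−2}), is surjective. -/

import Mathlib

open Complex ContinuousLinearMap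

lemma solveConj (a b w : ℂ) (h : ‖a‖ ≠ ‖b‖) :
    ∃ x : ℂ, a * (starRingEnd ℂ) x + b * x = w := by
  have hd : b * (starRingEnd ℂ) b - a * (starRingEnd ℂ) a ≠ 0 := by
    rw [Complex.mul_conj, Complex.mul_conj, sub_ne_zero]
    intro hc
    apply h
    have : Complex.normSq a = Complex.normSq b := by exact_mod_cast hc.symm
    rw [Complex.norm_def, Complex.norm_def, this]
  have hd' : (starRingEnd ℂ) b * b - (starRingEnd ℂ) a * a ≠ 0 := by
    intro hc; apply hd; rw [← hc]; ring
  refine ⟨((starRingEnd ℂ) b * w - a * (starRingEnd ℂ) w) /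
      (b * (starRingEnd ℂ) b - a * (starRingEnd ℂ) a), ?_⟩
  rw [map_div₀]
  simp only [map_sub, map_mul, Complex.conj_conj]
  field_simp
  ring

/-- Proposition 5.2: for the Fermat polynomial `H(z) = λ₁z₁^k + … + λₙzₙ^k` with `k > 2`
(here `n + 2 ≥ 2` variables), the defining map `Φ` of the polar variety
`M(H_k, Q)`, `Φ(z)_j = λ₁ z₁^{k−1}·conj(z_j) − λ_j z_j^{k−1}·conj(z₁)` (`j ≠ 1`), has
surjective real Fréchet derivative at every point of `Φ⁻¹(0)` with `z₁ ≠ 0`; hence away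
from the origin the polar variety is a reduced smooth submanifold of real dimension 2. -/
theorem stmt7 (n k : ℕ) (hk : 2 < k) (lam : Fin (n + 2) → ℂ) (hlam : ∀ i, lam i ≠ 0)
    (Φ : (Fin (n + 2) → ℂ) → ({j : Fin (n + 2) // j ≠ 0} → ℂ))
    (hΦ : ∀ (z : Fin (n + 2) → ℂ) (j : {j : Fin (n + 2) // j ≠ 0}),
      Φ z j = lam 0 * z 0 ^ (k - 1) * (starRingEnd ℂ) (z j.1)
        - lam j.1 * z j.1 ^ (k - 1) * (starRingEnd ℂ) (z 0))
    (z : Fin (n + 2) → ℂ) (hz : z 0 ≠ 0) (hzΦ : Φ z = 0) :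
    Function.Surjective (fderiv ℝ Φ z) := by
  have hΦe : Φ = fun w j => lam 0 * w 0 ^ (k - 1) * (starRingEnd ℂ) (w j.1)
      - lam j.1 * w j.1 ^ (k - 1) * (starRingEnd ℂ) (w 0) :=
    funext fun w => funext fun j => hΦ w j
  subst hΦe
  set m := k - 1 with hm
  have hm2 : 2 ≤ m := by omega
  -- derivative pieces
  let P : Fin (n + 2) → (Fin (n + 2) → ℂ) →L[ℝ] ℂ := fun i =>
    (((1 : ℂ →L[ℂ] ℂ).smulRight ((m : ℂ) * z i ^ (m - 1))).restrictScalars ℝ).comp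
      (ContinuousLinearMap.proj i)
  let C : Fin (n + 2) → (Fin (n + 2) → ℂ) →L[ℝ] ℂ := fun i =>
    (Complex.conjCLE : ℂ →L[ℝ] ℂ).comp (ContinuousLinearMap.proj i)
  let L : {j : Fin (n + 2) // j ≠ 0} → (Fin (n + 2) → ℂ) →L[ℝ] ℂ := fun j =>
    ((lam 0 * z 0 ^ m) • C j.1 + (starRingEnd ℂ) (z j.1) • (lam 0 • P 0)) -
      ((lam j.1 * z j.1 ^ m) • C 0 + (starRingEnd ℂ) (z 0) • (lam j.1 • P j.1))
  have hpow : ∀ i : Fin (n + 2), HasFDerivAt (fun w : Fin (n + 2) → ℂ => w i ^ m) (P i) z :=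
    fun i => ((hasDerivAt_pow m (z i)).hasFDerivAt.restrictScalars ℝ).comp z
      (hasFDerivAt_apply i z)
  have hconj : ∀ i : Fin (n + 2),
      HasFDerivAt (fun w : Fin (n + 2) → ℂ => (starRingEnd ℂ) (w i)) (C i) z :=
    fun i => Complex.conjCLE.hasFDerivAt.comp z (hasFDerivAt_apply i z)
  have hder : HasFDerivAt (fun (w : Fin (n + 2) → ℂ) (j : {j : Fin (n + 2) // j ≠ 0}) =>
      lam 0 * w 0 ^ m * (starRingEnd ℂ) (w j.1)
        - lam j.1 * w j.1 ^ m * (starRingEnd ℂ) (w 0)) (ContinuousLinearMap.pi L) z :=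
    hasFDerivAt_pi.mpr fun j =>
      (((hpow 0).const_mul (lam 0)).mul (hconj j.1)).sub
        (((hpow j.1).const_mul (lam j.1)).mul (hconj 0))
  rw [hder.fderiv]
  intro w
  -- inequality of moduli
  have habs : ∀ j : {j : Fin (n + 2) // j ≠ 0},
      ‖lam 0 * z 0 ^ m‖ ≠
        ‖-((starRingEnd ℂ) (z 0) * (lam j.1 * ((m : ℂ) * z j.1 ^ (m - 1))))‖ := by
    intro j
    have ha : 0 < ‖lam 0 * z 0 ^ m‖ := by
      simpa using mul_pos (norm_pos_iff.mpr (hlam 0)) (pow_pos (norm_pos_iff.mpr hz) m)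
    by_cases hzj : z j.1 = 0
    · rw [hzj, zero_pow (by omega)]
      simpa using ha.ne'
    · have hE := congrFun hzΦ j
      simp only [Pi.zero_apply, sub_eq_zero] at hE
      have hE' := congrArg (‖·‖) hE
      simp only [norm_mul, norm_pow, Complex.norm_conj] at hE'
      -- hE' : |lam0| * |z0|^m * |zj| = |lam j| * |zj|^m * |z0|
      have hzj' : 0 < ‖z j.1‖ := norm_pos_iff.mpr hzj
      have hz0' : 0 < ‖z 0‖ := norm_pos_iff.mpr hz
      have hlj : 0 < ‖lam j.1‖ := norm_pos_iff.mpr (hlam j.1)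
      intro hcon
      rw [norm_neg] at hcon
      simp only [norm_mul, Complex.norm_conj, norm_pow, Complex.norm_natCast] at hcon
      have hpowsplit : ‖z j.1‖ ^ m
          = ‖z j.1‖ ^ (m - 1) * ‖z j.1‖ := by
        rw [← pow_succ]; congr 1; omega
      rw [norm_mul, norm_pow] at ha
      rw [hpowsplit] at hE'
      have hEq : ‖lam 0‖ * ‖z 0‖ ^ m
          = ‖lam j.1‖ * ‖z j.1‖ ^ (m - 1) * ‖z 0‖ := by
        have := mul_right_cancel₀ hzj'.ne' (by linarith [hE'] : (‖lam 0‖ * ‖z 0‖ ^ m) * ‖z j.1‖ = (‖lam j.1‖ * ‖z j.1‖ ^ (m - 1) * ‖z 0‖) * ‖z j.1‖)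
        exact this
      have hmge : (2 : ℝ) ≤ (m : ℝ) := by exact_mod_cast hm2
      have hpos : 0 < ‖lam j.1‖ * ‖z j.1‖ ^ (m - 1) * ‖z 0‖ := by
        positivity
      nlinarith [hcon, hEq, hpos, hmge]
  -- solve componentwise
  have key : ∀ j : {j : Fin (n + 2) // j ≠ 0}, ∃ x : ℂ,
      (lam 0 * z 0 ^ m) * (starRingEnd ℂ) x +
        (-((starRingEnd ℂ) (z 0) * (lam j.1 * ((m : ℂ) * z j.1 ^ (m - 1))))) * x = w j :=
    fun j => solveConj _ _ _ (habs j)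
  choose x hx using key
  refine ⟨fun i => if h : i = 0 then 0 else x ⟨i, h⟩, ?_⟩
  funext j
  have hj := hx j
  simp only [ContinuousLinearMap.pi_apply, L, C, P, ContinuousLinearMap.sub_apply,
    ContinuousLinearMap.add_apply, ContinuousLinearMap.smul_apply,
    ContinuousLinearMap.comp_apply, ContinuousLinearMap.proj_apply,
    ContinuousLinearMap.coe_restrictScalars', ContinuousLinearMap.smulRight_apply,
    ContinuousLinearMap.one_apply, ContinuousLinearEquiv.coe_coe, Complex.conjCLE_apply,
    dif_pos rfl, dif_neg j.2, dite_true, Subtype.coe_eta, smul_eq_mul, map_zero, mul_zero, zero_mul, add_zero, zero_add,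
    sub_zero]
  rw [← hj]
  ring
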